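/- arXiv:1705.01415 — 2 statements merged into one kernel-verified Lean document; each statement's English description precedes it below -/
import Mathlib

section
/- Let q ≥ 1, d ∈ (ℕ∖{0})^q, ℓ ∈ ℕ, and let g be a smooth real-valued function defined on a neighborhood of 0 in ℝ^q. Then there exist a neighborhood W of 0 and a constant C > 0 such that for all y ∈ W: |g(y) − Σ_{γ ∈ ℕ^q : d·γ ≤ ℓ} (1/γ!) ∂^γ g(0) y^γ| ≤ C · N(y)^{ℓ+1}, where N(y) := max_{j=1,…,q} |y_j|^{1/d_j}. -/
open Complex Metric Set Filter Topology

noncomputable section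

/-- Partial derivative in the j-th coordinate for functions on ℝ^q. -/
def pdi {q : ℕ} (j : Fin q) (f : (Fin q → ℝ) → ℝ) : (Fin q → ℝ) → ℝ :=
  fun x => fderiv ℝ f x (Pi.single j 1)

/-- Iterated partial derivative ∂^γ for a multi-index γ ∈ ℕ^q. -/
def pmulti {q : ℕ} (γ : Fin q → ℕ) (f : (Fin q → ℝ) → ℝ) : (Fin q → ℝ) → ℝ :=
  (List.finRange q).foldr (fun j F => (pdi j)^[γ j] F) f

/-- The anisotropic norm N(y) = max_j |y_j|^{1/d_j}. -/
def anorm {q : ℕ} (d : Fin q → ℕ) (y : Fin q → ℝ) : ℝ :=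
  ⨆ j, |y j| ^ (1 / (d j : ℝ))

variable {q : ℕ} {U : Set (Fin q → ℝ)} {f g : (Fin q → ℝ) → ℝ}

lemma pdi_congr (hU : IsOpen U) (h : ∀ x ∈ U, f x = g x) (j : Fin q) :
    ∀ x ∈ U, pdi j f x = pdi j g x := by
  intro x hx
  unfold pdi
  rw [Filter.EventuallyEq.fderiv_eq (Filter.eventually_of_mem (hU.mem_nhds hx) h)]

lemma pdi_iter_congr (hU : IsOpen U) (j : Fin q) (n : ℕ) :
    ∀ {f g : (Fin q → ℝ) → ℝ}, (∀ x ∈ U, f x = g x) →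
    ∀ x ∈ U, (pdi j)^[n] f x = (pdi j)^[n] g x := by
  induction n with
  | zero => intro f g h x hx; simpa using h x hx
  | succ n ih =>
    intro f g h x hx
    rw [Function.iterate_succ_apply, Function.iterate_succ_apply]
    exact ih (pdi_congr hU h j) x hx

lemma pdi_contDiffOn (hU : IsOpen U) (hf : ContDiffOn ℝ (⊤ : ℕ∞) f U) (j : Fin q) :
    ContDiffOn ℝ (⊤ : ℕ∞) (pdi j f) U := by
  have h1 : ContDiffOn ℝ (⊤ : ℕ∞) (fderiv ℝ f) U :=
    hf.fderiv_of_isOpen hU (by simp)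
  exact h1.clm_apply contDiffOn_const

lemma pdi_iter_contDiffOn (hU : IsOpen U) (hf : ContDiffOn ℝ (⊤ : ℕ∞) f U) (j : Fin q) (n : ℕ) :
    ContDiffOn ℝ (⊤ : ℕ∞) ((pdi j)^[n] f) U := by
  induction n with
  | zero => simpa using hf
  | succ n ih => rw [Function.iterate_succ_apply']; exact pdi_contDiffOn hU ih j

lemma pdi_comm (hU : IsOpen U) (hf : ContDiffOn ℝ (⊤ : ℕ∞) f U) (i j : Fin q) :
    ∀ x ∈ U, pdi i (pdi j f) x = pdi j (pdi i f) x := by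
  intro x hx
  have hdiff : ∀ y ∈ U, HasFDerivAt f (fderiv ℝ f y) y := fun y hy =>
    ((hf.differentiableOn (by simp)).differentiableAt (hU.mem_nhds hy)).hasFDerivAt
  have hf' : ContDiffOn ℝ (⊤ : ℕ∞) (fderiv ℝ f) U := hf.fderiv_of_isOpen hU (by simp)
  have hx' : HasFDerivAt (fderiv ℝ f) (fderiv ℝ (fderiv ℝ f) x) x :=
    ((hf'.differentiableOn (by simp)).differentiableAt (hU.mem_nhds hx)).hasFDerivAt
  have hsymm := second_derivative_symmetric_of_eventually
    (Filter.eventually_of_mem (hU.mem_nhds hx) hdiff) hx'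
    (Pi.single i 1) (Pi.single j 1)
  have key : ∀ a b : Fin q, pdi a (pdi b f) x
      = fderiv ℝ (fderiv ℝ f) x (Pi.single a 1) (Pi.single b 1) := by
    intro a b
    have hL : HasFDerivAt (fun y => fderiv ℝ f y (Pi.single b (1:ℝ)))
        ((ContinuousLinearMap.apply ℝ ℝ (Pi.single b (1:ℝ))).comp
          (fderiv ℝ (fderiv ℝ f) x)) x := by
      simpa [Function.comp_def] using
        (ContinuousLinearMap.apply ℝ ℝ (Pi.single b (1:ℝ))).hasFDerivAt.comp x hx'
    show fderiv ℝ (fun y => fderiv ℝ f y (Pi.single b 1)) x (Pi.single a 1) = _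
    rw [hL.fderiv]
    rfl
  rw [key i j, key j i, hsymm]


section Fold
variable (γ : Fin q → ℕ)

noncomputable def pstep (γ : Fin q → ℕ) : Fin q → ((Fin q → ℝ) → ℝ) → ((Fin q → ℝ) → ℝ) :=
  fun j F => (pdi j)^[γ j] F

lemma pfold_contDiffOn (hU : IsOpen U) (hf : ContDiffOn ℝ (⊤ : ℕ∞) f U) (L : List (Fin q)) :
    ContDiffOn ℝ (⊤ : ℕ∞) (L.foldr (pstep γ) f) U := by
  induction L with
  | nil => exact hf
  | cons i L ih => exact pdi_iter_contDiffOn hU ih i (γ i)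

lemma pdi_iter_comm (hU : IsOpen U) (i j : Fin q) (n : ℕ) :
    ∀ {f : (Fin q → ℝ) → ℝ}, ContDiffOn ℝ (⊤ : ℕ∞) f U →
    ∀ x ∈ U, pdi j ((pdi i)^[n] f) x = (pdi i)^[n] (pdi j f) x := by
  induction n with
  | zero => intro f _ x _; rfl
  | succ n ih =>
    intro f hf x hx
    rw [Function.iterate_succ_apply, Function.iterate_succ_apply]
    have h1 := ih (pdi_contDiffOn hU hf i) x hx
    rw [h1]
    exact pdi_iter_congr hU i n (pdi_comm hU hf j i) x hx

lemma pfold_congr (hU : IsOpen U) (L : List (Fin q)) :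
    ∀ {f g : (Fin q → ℝ) → ℝ}, (∀ x ∈ U, f x = g x) →
    ∀ x ∈ U, L.foldr (pstep γ) f x = L.foldr (pstep γ) g x := by
  induction L with
  | nil => intro f g h x hx; exact h x hx
  | cons i L ih => intro f g h x hx; exact pdi_iter_congr hU i (γ i) (ih h) x hx

lemma pdi_pfold_comm (hU : IsOpen U) (j : Fin q) (L : List (Fin q)) :
    ∀ {f : (Fin q → ℝ) → ℝ}, ContDiffOn ℝ (⊤ : ℕ∞) f U →
    ∀ x ∈ U, pdi j (L.foldr (pstep γ) f) x = L.foldr (pstep γ) (pdi j f) x := by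
  induction L with
  | nil => intro f _ x _; rfl
  | cons i L ih =>
    intro f hf x hx
    show pdi j ((pdi i)^[γ i] (L.foldr (pstep γ) f)) x = _
    rw [pdi_iter_comm hU i j (γ i) (pfold_contDiffOn γ hU hf L) x hx]
    exact pdi_iter_congr hU i (γ i) (ih hf) x hx

lemma pfold_congr_exp {γ₁ γ₂ : Fin q → ℕ} (L : List (Fin q)) (h : ∀ i ∈ L, γ₁ i = γ₂ i)
    (f : (Fin q → ℝ) → ℝ) : L.foldr (pstep γ₁) f = L.foldr (pstep γ₂) f := by
  induction L with
  | nil => rfl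
  | cons i L ih =>
    show (pdi i)^[γ₁ i] _ = (pdi i)^[γ₂ i] _
    rw [h i List.mem_cons_self, ih (fun a ha => h a (List.mem_cons_of_mem i ha))]

lemma pfold_update (hU : IsOpen U) (j : Fin q) (L : List (Fin q)) :
    ∀ {f : (Fin q → ℝ) → ℝ}, ContDiffOn ℝ (⊤ : ℕ∞) f U → j ∈ L → L.Nodup →
    ∀ x ∈ U, L.foldr (pstep (Function.update γ j (γ j + 1))) f x
      = L.foldr (pstep γ) (pdi j f) x := by
  induction L with
  | nil => intro f _ h; exact absurd h List.not_mem_nil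
  | cons i L ih =>
    intro f hf hjL hnd x hx
    rcases List.nodup_cons.1 hnd with ⟨hiL, hndL⟩
    by_cases hij : i = j
    · subst hij
      have hnotin : i ∉ L := hiL
      show (pdi i)^[Function.update γ i (γ i + 1) i] _ x = (pdi i)^[γ i] _ x
      rw [Function.update_self]
      rw [pfold_congr_exp (γ₁ := Function.update γ i (γ i + 1)) (γ₂ := γ) L
        (fun a ha => Function.update_of_ne (fun h => hnotin (by rwa [h] at ha)) _ _) f]
      rw [Function.iterate_succ_apply]
      exact pdi_iter_congr hU i (γ i) (pdi_pfold_comm γ hU i L hf) x hx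
    · have hjL' : j ∈ L := by
        rcases List.mem_cons.1 hjL with h | h
        · exact absurd h.symm hij
        · exact h
      show (pdi i)^[Function.update γ j (γ j + 1) i] _ x = (pdi i)^[γ i] _ x
      rw [Function.update_of_ne hij]
      exact pdi_iter_congr hU i (γ i) (ih hf hjL' hndL) x hx

lemma pmulti_update (hU : IsOpen U) (hf : ContDiffOn ℝ (⊤ : ℕ∞) f U) (j : Fin q) :
    ∀ x ∈ U, pmulti (Function.update γ j (γ j + 1)) f x = pmulti γ (pdi j f) x :=
  pfold_update γ hU j (List.finRange q) hf (List.mem_finRange j) (List.nodup_finRange q)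

lemma pfold_zero_exp (L : List (Fin q)) : L.foldr (pstep (fun _ => (0:ℕ))) f = f := by
  induction L with
  | nil => rfl
  | cons i L ih =>
    simp only [List.foldr_cons, pstep, Function.iterate_zero, id]
    exact ih

lemma pmulti_zero_exp : pmulti (fun _ => (0:ℕ)) f = f := pfold_zero_exp _

end Fold

section Anorm
variable {d : Fin q → ℕ} {y : Fin q → ℝ}

lemma anorm_nonneg (d : Fin q → ℕ) (y : Fin q → ℝ) : 0 ≤ anorm d y :=
  Real.iSup_nonneg fun j => Real.rpow_nonneg (abs_nonneg _) _

lemma single_le_anorm [Nonempty (Fin q)] (j : Fin q) :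
    |y j| ^ (1 / (d j : ℝ)) ≤ anorm d y :=
  le_ciSup (f := fun j => |y j| ^ (1 / (d j : ℝ))) (Set.Finite.bddAbove (Set.finite_range _)) j

lemma abs_le_anorm_pow [Nonempty (Fin q)] (hd : ∀ j, 0 < d j) (j : Fin q) :
    |y j| ≤ anorm d y ^ (d j) := by
  have h1 : (|y j| ^ (1 / (d j : ℝ))) ^ (d j) = |y j| := by
    rw [← Real.rpow_natCast (|y j| ^ (1 / (d j : ℝ))) (d j), ← Real.rpow_mul (abs_nonneg _),
      one_div, inv_mul_cancel₀ (by exact_mod_cast (hd j).ne'), Real.rpow_one]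
  calc |y j| = (|y j| ^ (1 / (d j : ℝ))) ^ (d j) := h1.symm
    _ ≤ anorm d y ^ (d j) :=
      pow_le_pow_left₀ (Real.rpow_nonneg (abs_nonneg _) _) (single_le_anorm j) _

lemma anorm_le_one [Nonempty (Fin q)] (h : ∀ j, |y j| ≤ 1) : anorm d y ≤ 1 :=
  ciSup_le fun j => Real.rpow_le_one (abs_nonneg _) (h j) (by positivity)

lemma anorm_smul_le [Nonempty (Fin q)] {t : ℝ} (ht : |t| ≤ 1) :
    anorm d (t • y) ≤ anorm d y := by
  refine ciSup_le fun j => le_trans ?_ (single_le_anorm j)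
  have : |(t • y) j| ≤ |y j| := by
    simp only [Pi.smul_apply, smul_eq_mul, abs_mul]
    nlinarith [abs_nonneg (y j), abs_nonneg t]
  exact Real.rpow_le_rpow (abs_nonneg _) this (by positivity)

end Anorm

/-- The anisotropic Taylor polynomial. -/
noncomputable def Tpoly (q : ℕ) (d : Fin q → ℕ) (ℓ : ℕ) (g : (Fin q → ℝ) → ℝ) (y : Fin q → ℝ) : ℝ :=
  ∑ γ ∈ (Fintype.piFinset fun _ : Fin q => Finset.range (ℓ + 1)).filter
      (fun γ => ∑ j, d j * γ j ≤ ℓ),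
    (∏ j, ((γ j).factorial : ℝ))⁻¹ * pmulti γ g 0 * ∏ j, y j ^ γ j

section Comb
variable {d : Fin q → ℕ} {ℓ : ℕ}

def Sfin (q : ℕ) (d : Fin q → ℕ) (ℓ : ℕ) : Finset (Fin q → ℕ) :=
  (Fintype.piFinset fun _ : Fin q => Finset.range (ℓ + 1)).filter
      (fun γ => ∑ j, d j * γ j ≤ ℓ)

lemma mem_Sfin (hd : ∀ j, 0 < d j) {γ : Fin q → ℕ} :
    γ ∈ Sfin q d ℓ ↔ ∑ j, d j * γ j ≤ ℓ := by
  constructor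
  · intro h; exact (Finset.mem_filter.1 h).2
  · intro h
    refine Finset.mem_filter.2 ⟨Fintype.mem_piFinset.2 fun j => Finset.mem_range.2 ?_, h⟩
    have h1 : γ j ≤ d j * γ j := Nat.le_mul_of_pos_left _ (hd j)
    have h2 : d j * γ j ≤ ∑ i, d i * γ i :=
      Finset.single_le_sum (f := fun i => d i * γ i) (fun i _ => Nat.zero_le _) (Finset.mem_univ j)
    omega

lemma Tpoly_eq_sum (g : (Fin q → ℝ) → ℝ) (y : Fin q → ℝ) :
    Tpoly q d ℓ g y = ∑ γ ∈ Sfin q d ℓ,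
      (∏ j, ((γ j).factorial : ℝ))⁻¹ * pmulti γ g 0 * ∏ j, y j ^ γ j := rfl

lemma Tpoly_zero (hq : 1 ≤ q) (hd : ∀ j, 0 < d j) (g : (Fin q → ℝ) → ℝ) :
    Tpoly q d ℓ g 0 = g 0 := by
  rw [Tpoly_eq_sum]
  have h0 : (fun _ : Fin q => (0:ℕ)) ∈ Sfin q d ℓ := (mem_Sfin hd).2 (by simp)
  rw [Finset.sum_eq_single_of_mem _ h0]
  · have : ∀ j : Fin q, ((0:Fin q → ℝ)) j ^ ((fun _ : Fin q => (0:ℕ)) j) = 1 := by simp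
    simp [pmulti_zero_exp]
  · intro γ hγ hne
    have : ∃ j, γ j ≠ 0 := by
      by_contra hc
      push_neg at hc
      exact hne (funext fun j => hc j)
    obtain ⟨j, hj⟩ := this
    have : ((0:Fin q → ℝ)) j ^ γ j = 0 := by
      simp [zero_pow hj]
    have hz : (∏ i, ((0:Fin q → ℝ)) i ^ γ i) = 0 :=
      Finset.prod_eq_zero (Finset.mem_univ j) this
    rw [hz]
    ring
end Comb

section ClaimB
variable {d : Fin q → ℕ} {ℓ : ℕ}

lemma Aj_zero (hd : ∀ j, 0 < d j) {j : Fin q} (hj : ℓ < d j) (c : (Fin q → ℕ) → ℝ) (t : ℝ) :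
    ∑ γ ∈ Sfin q d ℓ, c γ * ((γ j : ℝ) * t ^ (∑ i, γ i - 1)) = 0 := by
  refine Finset.sum_eq_zero fun γ hγ => ?_
  have hmem := (mem_Sfin hd).1 hγ
  have h2 : d j * γ j ≤ ∑ i, d i * γ i :=
    Finset.single_le_sum (f := fun i => d i * γ i) (fun i _ => Nat.zero_le _) (Finset.mem_univ j)
  have : γ j = 0 := by
    by_contra hne
    have : d j ≤ d j * γ j := Nat.le_mul_of_pos_right _ (Nat.pos_of_ne_zero hne)
    omega
  rw [this]
  norm_num

lemma Aj_eq (hU : IsOpen U) (h0 : (0 : Fin q → ℝ) ∈ U)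
    (hg : ContDiffOn ℝ (⊤ : ℕ∞) g U) (hd : ∀ j, 0 < d j) {j : Fin q} (hj : d j ≤ ℓ)
    (y : Fin q → ℝ) (t : ℝ) :
    ∑ γ ∈ Sfin q d ℓ,
        ((∏ i, ((γ i).factorial : ℝ))⁻¹ * pmulti γ g 0 * ∏ i, y i ^ γ i)
          * ((γ j : ℝ) * t ^ (∑ i, γ i - 1))
      = y j * Tpoly q d (ℓ - d j) (pdi j g) (t • y) := by
  rw [Tpoly_eq_sum, Finset.mul_sum]
  rw [← Finset.sum_filter_of_ne (p := fun γ => γ j ≠ 0)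
    (fun γ _ hne => by
      intro hz
      apply hne
      rw [hz]
      norm_num)]
  refine Finset.sum_bij' (fun γ _ => Function.update γ j (γ j - 1))
    (fun γ' _ => Function.update γ' j (γ' j + 1)) ?_ ?_ ?_ ?_ ?_
  · -- hi : image in target
    intro γ hγ
    rw [Finset.mem_filter] at hγ
    obtain ⟨hγS, hγj⟩ := hγ
    have hmem := (mem_Sfin hd).1 hγS
    refine (mem_Sfin hd).2 ?_
    have e0 : (fun i => d i * Function.update γ j (γ j - 1) i)
        = Function.update (fun i => d i * γ i) j (d j * (γ j - 1)) := by
      funext i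
      by_cases hij : i = j
      · subst hij; simp
      · simp [Function.update_of_ne hij]
    have e1 : ∑ i, d i * Function.update γ j (γ j - 1) i
        = d j * (γ j - 1) + ∑ i ∈ Finset.univ \ {j}, d i * γ i := by
      calc ∑ i, d i * Function.update γ j (γ j - 1) i
          = ∑ i, Function.update (fun i => d i * γ i) j (d j * (γ j - 1)) i := by rw [e0]
        _ = _ := Finset.sum_update_of_mem (Finset.mem_univ j) _ _
    have e2 : ∑ i, d i * γ i = d j * γ j + ∑ i ∈ Finset.univ \ {j}, d i * γ i := by
      rw [← Finset.sum_update_of_mem (Finset.mem_univ j) (fun i => d i * γ i) (d j * γ j)]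
      congr 1
      funext i
      by_cases hij : i = j
      · subst hij; simp
      · simp [Function.update_of_ne hij]
    have e3 : d j * (γ j - 1) = d j * γ j - d j := by rw [Nat.mul_sub, mul_one]
    have e4 : d j ≤ d j * γ j := Nat.le_mul_of_pos_right _ (Nat.pos_of_ne_zero hγj)
    beta_reduce
    omega
  · -- hj : inverse image in source
    intro γ' hγ'
    have hmem := (mem_Sfin hd).1 hγ'
    rw [Finset.mem_filter]
    constructor
    · refine (mem_Sfin hd).2 ?_
      have e0 : (fun i => d i * Function.update γ' j (γ' j + 1) i)
          = Function.update (fun i => d i * γ' i) j (d j * (γ' j + 1)) := by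
        funext i
        by_cases hij : i = j
        · subst hij; simp
        · simp [Function.update_of_ne hij]
      have e1 : ∑ i, d i * Function.update γ' j (γ' j + 1) i
          = d j * (γ' j + 1) + ∑ i ∈ Finset.univ \ {j}, d i * γ' i := by
        calc ∑ i, d i * Function.update γ' j (γ' j + 1) i
            = ∑ i, Function.update (fun i => d i * γ' i) j (d j * (γ' j + 1)) i := by rw [e0]
          _ = _ := Finset.sum_update_of_mem (Finset.mem_univ j) _ _
      have e2 : ∑ i, d i * γ' i = d j * γ' j + ∑ i ∈ Finset.univ \ {j}, d i * γ' i := by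
        rw [← Finset.sum_update_of_mem (Finset.mem_univ j) (fun i => d i * γ' i) (d j * γ' j)]
        congr 1
        funext i
        by_cases hij : i = j
        · subst hij; simp
        · simp [Function.update_of_ne hij]
      have e3 : d j * (γ' j + 1) = d j * γ' j + d j := by ring
      beta_reduce
      omega
    · simp
  · -- left_inv
    intro γ hγ
    rw [Finset.mem_filter] at hγ
    funext i
    by_cases hij : i = j
    · subst hij
      simp only [Function.update_self]
      omega
    · simp [Function.update_of_ne hij]
  · -- right_inv
    intro γ' _
    funext i
    by_cases hij : i = j
    · subst hij; simp
    · simp [Function.update_of_ne hij]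
  · -- term equality
    intro γ hγ
    beta_reduce
    rw [Finset.mem_filter] at hγ
    obtain ⟨hγS, hγj⟩ := hγ
    set γ' := Function.update γ j (γ j - 1) with hγ'def
    have hup : Function.update γ' j (γ' j + 1) = γ := by
      funext i
      by_cases hij : i = j
      · subst hij
        simp only [hγ'def, Function.update_self]
        omega
      · simp [hγ'def, Function.update_of_ne hij]
    have hpm : pmulti γ g 0 = pmulti γ' (pdi j g) 0 := by
      have := pmulti_update γ' hU hg j 0 h0
      rwa [hup] at this
    have hγ'j : γ' j = γ j - 1 := by simp [hγ'def]
    have hfacsplit : (fun i => (((γ' i).factorial : ℝ)))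
        = Function.update (fun i => (((γ i).factorial : ℝ))) j (((γ j - 1).factorial : ℝ)) := by
      funext i
      by_cases hij : i = j
      · subst hij; simp [hγ'def]
      · simp [hγ'def, Function.update_of_ne hij]
    have hfac : (∏ i, ((γ i).factorial : ℝ)) = (γ j : ℝ) * ∏ i, ((γ' i).factorial : ℝ) := by
      rw [Finset.prod_eq_mul_prod_sdiff_singleton_of_mem (Finset.mem_univ j)
        (fun i => (((γ i).factorial : ℝ)))]
      calc ((γ j).factorial : ℝ) * ∏ i ∈ Finset.univ \ {j}, ((γ i).factorial : ℝ)
          = (γ j : ℝ) * (((γ j - 1).factorial : ℝ)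
            * ∏ i ∈ Finset.univ \ {j}, ((γ i).factorial : ℝ)) := by
            have : (γ j).factorial = γ j * (γ j - 1).factorial := by
              conv_lhs => rw [show γ j = (γ j - 1) + 1 by omega]
              rw [Nat.factorial_succ]
              congr 1
              omega
            rw [this]
            push_cast
            ring
        _ = (γ j : ℝ) * ∏ i, ((γ' i).factorial : ℝ) := by
            rw [show (fun i => (((γ' i).factorial : ℝ))) = _ from hfacsplit,
              Finset.prod_update_of_mem (Finset.mem_univ j)]
    have hysplit : (fun i => y i ^ γ' i)
        = Function.update (fun i => y i ^ γ i) j (y j ^ (γ j - 1)) := by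
      funext i
      by_cases hij : i = j
      · subst hij; simp [hγ'def]
      · simp [hγ'def, Function.update_of_ne hij]
    have hy : (∏ i, y i ^ γ i) = y j * ∏ i, y i ^ γ' i := by
      rw [Finset.prod_eq_mul_prod_sdiff_singleton_of_mem (Finset.mem_univ j) (fun i => y i ^ γ i),
        show (fun i => y i ^ γ' i) = _ from hysplit,
        Finset.prod_update_of_mem (Finset.mem_univ j)]
      rw [show y j ^ γ j = y j * y j ^ (γ j - 1) from ?_]
      · ring
      · conv_lhs => rw [show γ j = (γ j - 1) + 1 by omega]
        rw [pow_succ]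
        ring
    have hsum : ∑ i, γ' i = ∑ i, γ i - 1 := by
      have e1 : ∑ i, γ' i = (γ j - 1) + ∑ i ∈ Finset.univ \ {j}, γ i := by
        rw [hγ'def]
        exact Finset.sum_update_of_mem (Finset.mem_univ j) _ _
      have e2 : ∑ i, γ i = γ j + ∑ i ∈ Finset.univ \ {j}, γ i := by
        rw [← Finset.sum_update_of_mem (Finset.mem_univ j) γ (γ j)]
        congr 1
        funext i
        by_cases hij : i = j
        · subst hij; simp
        · simp [Function.update_of_ne hij]
      omega
    have hts : (∏ i, (t • y) i ^ γ' i) = t ^ (∑ i, γ i - 1) * ∏ i, y i ^ γ' i := by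
      have : (∏ i, (t • y) i ^ γ' i) = (∏ i, t ^ γ' i) * ∏ i, y i ^ γ' i := by
        rw [← Finset.prod_mul_distrib]
        congr 1
        funext i
        simp [mul_pow]
      rw [this, Finset.prod_pow_eq_pow_sum, hsum]
    have hP : (∏ i, ((γ' i).factorial : ℝ)) ≠ 0 := by
      refine ne_of_gt (Finset.prod_pos fun i _ => ?_)
      exact_mod_cast Nat.factorial_pos _
    have hγjR : (γ j : ℝ) ≠ 0 := Nat.cast_ne_zero.2 hγj
    rw [hfac, hy, hpm, hts]
    field_simp

end ClaimB

section Analytic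
variable {d : Fin q → ℕ} {ℓ : ℕ}

lemma clm_apply_eq_sum (L : (Fin q → ℝ) →L[ℝ] ℝ) (y : Fin q → ℝ) :
    L y = ∑ j, y j * L (Pi.single j 1) := by
  have hy : y = ∑ j, Pi.single j (y j) := by
    rw [Finset.univ_sum_single]
  conv_lhs => rw [hy]
  rw [map_sum]
  congr 1
  funext j
  have : Pi.single j (y j) = y j • (Pi.single j 1 : Fin q → ℝ) := by
    funext i
    by_cases hij : i = j
    · subst hij; simp
    · simp [Pi.single_eq_of_ne hij]
  rw [this, map_smul, smul_eq_mul]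

lemma hasDerivAt_comp_smul (hU : IsOpen U) (hg : ContDiffOn ℝ (⊤ : ℕ∞) g U)
    (y : Fin q → ℝ) {t : ℝ} (ht : t • y ∈ U) :
    HasDerivAt (fun s : ℝ => g (s • y)) (∑ j, y j * pdi j g (t • y)) t := by
  have hdiff : DifferentiableAt ℝ g (t • y) :=
    (hg.differentiableOn (by simp)).differentiableAt (hU.mem_nhds ht)
  have hs : HasDerivAt (fun s : ℝ => s • y) y t := by
    simpa using (hasDerivAt_id t).smul_const y
  have hcomp := hdiff.hasFDerivAt.comp_hasDerivAt t hs
  have : fderiv ℝ g (t • y) y = ∑ j, y j * pdi j g (t • y) := clm_apply_eq_sum _ y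
  rw [this] at hcomp
  exact hcomp

lemma hasDerivAt_Tpoly_smul (g : (Fin q → ℝ) → ℝ) (y : Fin q → ℝ) (t : ℝ) :
    HasDerivAt (fun s : ℝ => Tpoly q d ℓ g (s • y))
      (∑ γ ∈ Sfin q d ℓ,
        ((∏ i, ((γ i).factorial : ℝ))⁻¹ * pmulti γ g 0 * ∏ i, y i ^ γ i)
          * ((∑ i, γ i : ℕ) * t ^ (∑ i, γ i - 1))) t := by
  have hfun : (fun s : ℝ => Tpoly q d ℓ g (s • y))
      = fun s => ∑ γ ∈ Sfin q d ℓ,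
          ((∏ i, ((γ i).factorial : ℝ))⁻¹ * pmulti γ g 0 * ∏ i, y i ^ γ i)
            * s ^ (∑ i, γ i) := by
    funext s
    rw [Tpoly_eq_sum]
    refine Finset.sum_congr rfl fun γ _ => ?_
    have : (∏ i, (s • y) i ^ γ i) = (∏ i, y i ^ γ i) * s ^ (∑ i, γ i) := by
      rw [show (∏ i, (s • y) i ^ γ i) = (∏ i, s ^ γ i) * ∏ i, y i ^ γ i from ?_,
        Finset.prod_pow_eq_pow_sum]
      · ring
      · rw [← Finset.prod_mul_distrib]
        congr 1
        funext i
        simp [mul_pow]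
    rw [this]
    ring
  rw [hfun]
  refine HasDerivAt.fun_sum fun γ _ => ?_
  simpa [mul_assoc] using (hasDerivAt_pow (∑ i, γ i) t).const_mul
    ((∏ i, ((γ i).factorial : ℝ))⁻¹ * pmulti γ g 0 * ∏ i, y i ^ γ i)

lemma sum_split (S : Finset (Fin q → ℕ)) (c : (Fin q → ℕ) → ℝ) (t : ℝ) :
    ∑ γ ∈ S, c γ * ((∑ i, γ i : ℕ) * t ^ (∑ i, γ i - 1))
      = ∑ j : Fin q, ∑ γ ∈ S, c γ * ((γ j : ℝ) * t ^ (∑ i, γ i - 1)) := by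
  rw [Finset.sum_comm]
  refine Finset.sum_congr rfl fun γ _ => ?_
  have : ((∑ i, γ i : ℕ) : ℝ) = ∑ j, (γ j : ℝ) := by push_cast; rfl
  rw [this, Finset.sum_mul, Finset.mul_sum]

end Analytic

lemma key_induction (hq : 1 ≤ q) (d : Fin q → ℕ) (hd : ∀ j, 0 < d j)
    {U : Set (Fin q → ℝ)} (hU : IsOpen U) (h0 : (0 : Fin q → ℝ) ∈ U) :
    ∀ ℓ : ℕ, ∀ g : (Fin q → ℝ) → ℝ, ContDiffOn ℝ (⊤ : ℕ∞) g U →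
    ∃ ε > 0, ∃ C > 0, ∀ y : Fin q → ℝ, ‖y‖ ≤ ε →
      |g y - Tpoly q d ℓ g y| ≤ C * anorm d y ^ (ℓ + 1) := by
  haveI : Nonempty (Fin q) := ⟨⟨0, hq⟩⟩
  intro ℓ
  induction ℓ using Nat.strong_induction_on with
  | _ ℓ IH =>
    intro g hg
    obtain ⟨ε₀, hε₀pos, hball⟩ : ∃ ε > 0, closedBall (0 : Fin q → ℝ) ε ⊆ U :=
      (Metric.nhds_basis_closedBall.mem_iff).1 (hU.mem_nhds h0)
    have hpdi : ∀ j : Fin q, ContDiffOn ℝ (⊤ : ℕ∞) (pdi j g) U :=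
      fun j => pdi_contDiffOn hU hg j
    set P : Fin q → (Fin q → ℝ) → ℝ :=
      fun j => if d j ≤ ℓ then Tpoly q d (ℓ - d j) (pdi j g) else 0 with hP
    have claim : ∀ j : Fin q, ∃ ε > 0, ∃ C > 0, ∀ z : Fin q → ℝ, ‖z‖ ≤ ε →
        |pdi j g z - P j z| ≤ C * anorm d z ^ (ℓ + 1 - d j) := by
      intro j
      by_cases hdj : d j ≤ ℓ
      · have hlt : ℓ - d j < ℓ := by have := hd j; omega
        obtain ⟨ε, hε, C, hC, hb⟩ := IH (ℓ - d j) hlt (pdi j g) (hpdi j)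
        refine ⟨ε, hε, C, hC, fun z hz => ?_⟩
        have := hb z hz
        rw [hP]
        simp only [if_pos hdj]
        have hexp : ℓ - d j + 1 = ℓ + 1 - d j := by omega
        rwa [hexp] at this
      · obtain ⟨M, hM⟩ := (isCompact_closedBall (0 : Fin q → ℝ) ε₀).exists_bound_of_continuousOn
          ((hpdi j).continuousOn.mono hball)
        refine ⟨ε₀, hε₀pos, M + 1, ?_, fun z hz => ?_⟩
        · have := hM 0 (mem_closedBall_self hε₀pos.le)
          have h0n : (0:ℝ) ≤ ‖pdi j g 0‖ := norm_nonneg _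
          linarith
        · have hzb : z ∈ closedBall (0 : Fin q → ℝ) ε₀ := by
            rwa [mem_closedBall_zero_iff]
          have := hM z hzb
          have hexp : ℓ + 1 - d j = 0 := by omega
          rw [hP]
          simp only [if_neg hdj, Pi.zero_apply, sub_zero, hexp, pow_zero, mul_one]
          calc |pdi j g z| = ‖pdi j g z‖ := rfl
            _ ≤ M := this
            _ ≤ M + 1 := by linarith
    choose ε' hε'pos C' hC'pos hbd using claim
    set εm := Finset.univ.inf' Finset.univ_nonempty ε' with hεm
    have hεmle : ∀ j, εm ≤ ε' j := fun j => Finset.inf'_le _ (Finset.mem_univ j)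
    have hεmpos : 0 < εm := by
      rw [hεm, Finset.lt_inf'_iff]
      exact fun j _ => hε'pos j
    refine ⟨min (min ε₀ 1) εm, by positivity, ∑ j, C' j,
      Finset.sum_pos (fun j _ => hC'pos j) Finset.univ_nonempty, fun y hy => ?_⟩
    have hyε₀ : ‖y‖ ≤ ε₀ := le_trans hy (le_trans (min_le_left _ _) (min_le_left _ _))
    have hy1 : ‖y‖ ≤ 1 := le_trans hy (le_trans (min_le_left _ _) (min_le_right _ _))
    have hyεm : ‖y‖ ≤ εm := le_trans hy (min_le_right _ _)
    have hanorm1 : anorm d y ≤ 1 :=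
      anorm_le_one fun j => le_trans (norm_le_pi_norm y j) hy1
    have hyU : ∀ t : ℝ, t ∈ Icc (0:ℝ) 1 → t • y ∈ U := by
      intro t ht
      apply hball
      rw [mem_closedBall_zero_iff, norm_smul]
      calc ‖t‖ * ‖y‖ ≤ 1 * ε₀ := by
            apply mul_le_mul _ hyε₀ (norm_nonneg _) zero_le_one
            rw [Real.norm_eq_abs, abs_le]
            exact ⟨by linarith [ht.1], ht.2⟩
        _ = ε₀ := one_mul _
    set φ : ℝ → ℝ := fun t => g (t • y) - Tpoly q d ℓ g (t • y) with hφ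
    set Dt : ℝ → ℝ := fun t => ∑ j, y j * (pdi j g (t • y) - P j (t • y)) with hDt
    have hderiv : ∀ t ∈ Icc (0:ℝ) 1, HasDerivAt φ (Dt t) t := by
      intro t ht
      have h1 := hasDerivAt_comp_smul hU hg y (hyU t ht)
      have h2 := hasDerivAt_Tpoly_smul (d := d) (ℓ := ℓ) g y t
      have h3 := h1.sub h2
      have hval : (∑ j, y j * pdi j g (t • y)) -
          (∑ γ ∈ Sfin q d ℓ,
            ((∏ i, ((γ i).factorial : ℝ))⁻¹ * pmulti γ g 0 * ∏ i, y i ^ γ i)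
              * ((∑ i, γ i : ℕ) * t ^ (∑ i, γ i - 1))) = Dt t := by
        rw [sum_split, hDt, ← Finset.sum_sub_distrib]
        refine Finset.sum_congr rfl fun j _ => ?_
        by_cases hdj : d j ≤ ℓ
        · rw [Aj_eq hU h0 hg hd hdj y t, hP]
          simp only [if_pos hdj]
          ring
        · rw [Aj_zero hd (by omega) _ t, hP]
          simp only [if_neg hdj, Pi.zero_apply]
          ring
      rw [← hval]
      exact h3
    have hDbound : ∀ t ∈ Icc (0:ℝ) 1, ‖Dt t‖ ≤ (∑ j, C' j) * anorm d y ^ (ℓ + 1) := by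
      intro t ht
      rw [hDt, Real.norm_eq_abs]
      calc |∑ j, y j * (pdi j g (t • y) - P j (t • y))|
          ≤ ∑ j, |y j * (pdi j g (t • y) - P j (t • y))| := Finset.abs_sum_le_sum_abs _ _
        _ ≤ ∑ j, C' j * anorm d y ^ (ℓ + 1) := by
            refine Finset.sum_le_sum fun j _ => ?_
            rw [abs_mul]
            have htle : ‖t • y‖ ≤ ε' j := by
              rw [norm_smul]
              calc ‖t‖ * ‖y‖ ≤ 1 * εm := by
                    apply mul_le_mul _ hyεm (norm_nonneg _) zero_le_one
                    rw [Real.norm_eq_abs, abs_le]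
                    exact ⟨by linarith [ht.1], ht.2⟩
                _ = εm := one_mul _
                _ ≤ ε' j := hεmle j
            have hb1 : |pdi j g (t • y) - P j (t • y)|
                ≤ C' j * anorm d (t • y) ^ (ℓ + 1 - d j) := hbd j (t • y) htle
            have hb2 : anorm d (t • y) ≤ anorm d y := by
              apply anorm_smul_le
              rw [abs_le]
              exact ⟨by linarith [ht.1], ht.2⟩
            have hb3 : anorm d (t • y) ^ (ℓ + 1 - d j) ≤ anorm d y ^ (ℓ + 1 - d j) :=
              pow_le_pow_left₀ (anorm_nonneg d _) hb2 _
            have hb4 : |y j| ≤ anorm d y ^ (d j) := abs_le_anorm_pow hd j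
            have e1 : |y j| * |pdi j g (t • y) - P j (t • y)|
                ≤ (anorm d y ^ (d j)) * (C' j * anorm d y ^ (ℓ + 1 - d j)) := by
              refine mul_le_mul hb4 (le_trans hb1 ?_) (abs_nonneg _)
                (pow_nonneg (anorm_nonneg d y) _)
              exact mul_le_mul_of_nonneg_left hb3 (hC'pos j).le
            have e2 : (anorm d y ^ (d j)) * (C' j * anorm d y ^ (ℓ + 1 - d j))
                = C' j * anorm d y ^ (d j + (ℓ + 1 - d j)) := by rw [pow_add]; ring
            have e3 : anorm d y ^ (d j + (ℓ + 1 - d j)) ≤ anorm d y ^ (ℓ + 1) :=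
              pow_le_pow_of_le_one (anorm_nonneg d y) hanorm1 (by omega)
            have e4 : C' j * anorm d y ^ (d j + (ℓ + 1 - d j)) ≤ C' j * anorm d y ^ (ℓ + 1) :=
              mul_le_mul_of_nonneg_left e3 (hC'pos j).le
            linarith
        _ = (∑ j, C' j) * anorm d y ^ (ℓ + 1) := by rw [Finset.sum_mul]
    have hmvt := norm_image_sub_le_of_norm_deriv_le_segment'
      (f := φ) (f' := Dt) (C := (∑ j, C' j) * anorm d y ^ (ℓ + 1))
      (fun t ht => (hderiv t ht).hasDerivWithinAt)
      (fun t ht => hDbound t (Ico_subset_Icc_self ht)) 1 (by norm_num)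
    have hφ1 : φ 1 = g y - Tpoly q d ℓ g y := by rw [hφ]; simp
    have hφ0 : φ 0 = 0 := by
      rw [hφ]
      simp only [zero_smul]
      rw [Tpoly_zero hq hd g]
      ring
    rw [hφ1, hφ0, sub_zero] at hmvt
    calc |g y - Tpoly q d ℓ g y| = ‖g y - Tpoly q d ℓ g y‖ := rfl
      _ ≤ (∑ j, C' j) * anorm d y ^ (ℓ + 1) * (1 - 0) := hmvt
      _ = (∑ j, C' j) * anorm d y ^ (ℓ + 1) := by ring

/-- anisotropic Taylor expansion: for g smooth near 0 in ℝ^q,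
g(y) = Σ_{d·γ ≤ ℓ} (1/γ!) ∂^γ g(0) y^γ + O(N(y)^{ℓ+1}) near 0. -/
theorem statement_11 (q : ℕ) (hq : 1 ≤ q) (d : Fin q → ℕ) (hd : ∀ j, 0 < d j)
    (ℓ : ℕ) (g : (Fin q → ℝ) → ℝ)
    (U : Set (Fin q → ℝ)) (hU : IsOpen U) (h0 : (0 : Fin q → ℝ) ∈ U)
    (hg : ContDiffOn ℝ (⊤ : ℕ∞) g U) :
    ∃ W ∈ 𝓝 (0 : Fin q → ℝ), ∃ C > 0, ∀ y ∈ W,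
      |g y - ∑ γ ∈ (Fintype.piFinset fun _ : Fin q => Finset.range (ℓ + 1)).filter
          (fun γ => ∑ j, d j * γ j ≤ ℓ),
        (∏ j, ((γ j).factorial : ℝ))⁻¹ * pmulti γ g 0 * ∏ j, y j ^ γ j|
      ≤ C * anorm d y ^ (ℓ + 1) := by
  obtain ⟨ε, hε, C, hC, hb⟩ := key_induction hq d hd hU h0 ℓ g hg
  refine ⟨closedBall 0 ε, closedBall_mem_nhds 0 hε, C, hC, fun y hy => ?_⟩
  exact hb y (mem_closedBall_zero_iff.1 hy)


end
end

section
/- Let D ⊆ ℂ be a disc centered at 0, B ⊆ ℂ×ℝ a ball centered at 0, τ ≥ 1 an integer, and φ : D×B → ℝ a smooth function such that for every z₁ ∈ D: ∂_y φ(z₁,0,0) = 0 (y the ℝ-variable of B) and ∂^j_{z₂}∂^k_{z̄₂}φ(z₁,0,0) = 0 for all j,k with j+k < τ. Then there exist a disc D′ ⊆ D centered at 0, ε > 0, and C > 0 such that for all z₁ ∈ D′ and all (z₂,y) ∈ ℂ×ℝ with |z₂|² + y² < ε²: φ(z₁,z₂,y) ≤ C|z₂|^τ + C|y|. -/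
open Complex Metric Set MeasureTheory Filter Asymptotics Topology

noncomputable section

/-- One-variable Wirtinger derivative ∂/∂z. -/
def w1 (f : ℂ → ℂ) (z : ℂ) : ℂ :=
  (fderiv ℝ f z 1 - Complex.I * fderiv ℝ f z Complex.I) / 2

/-- One-variable Wirtinger derivative ∂/∂z̄. -/
def w1bar (f : ℂ → ℂ) (z : ℂ) : ℂ :=
  (fderiv ℝ f z 1 + Complex.I * fderiv ℝ f z Complex.I) / 2

/-- Wirtinger derivative ∂/∂z₂ for functions on ℂ × ℂ × ℝ. -/
def Dz2 (f : ℂ × ℂ × ℝ → ℂ) : ℂ × ℂ × ℝ → ℂ :=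
  fun p => w1 (fun w => f (p.1, w, p.2.2)) p.2.1

/-- Wirtinger derivative ∂/∂z̄₂ for functions on ℂ × ℂ × ℝ. -/
def Dz2bar (f : ℂ × ℂ × ℝ → ℂ) : ℂ × ℂ × ℝ → ℂ :=
  fun p => w1bar (fun w => f (p.1, w, p.2.2)) p.2.1

/-- Partial derivative in the real variable y for functions on ℂ × ℂ × ℝ. -/
def Dy (f : ℂ × ℂ × ℝ → ℂ) : ℂ × ℂ × ℝ → ℂ :=
  fun p => fderiv ℝ (fun y => f (p.1, p.2.1, y)) p.2.2 1

/-- The mixed Wirtinger derivative ∂^j_{z₂}∂^k_{z̄₂} φ evaluated at (z₁, 0, 0). -/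
def mixedD (φ : ℂ × ℂ × ℝ → ℝ) (j k : ℕ) (z₁ : ℂ) : ℂ :=
  (Dz2^[j] (Dz2bar^[k] (fun p => (φ p : ℂ)))) (z₁, 0, 0)

/-- Complex coordinate directions in ℂ³. -/
def e3 : Fin 3 → ℂ → ℂ × ℂ × ℂ := ![fun c => (c, 0, 0), fun c => (0, c, 0), fun c => (0, 0, c)]

/-- Wirtinger derivative ∂/∂z_j on ℂ³. -/
def wd3 (j : Fin 3) (f : ℂ × ℂ × ℂ → ℂ) (z : ℂ × ℂ × ℂ) : ℂ :=
  (fderiv ℝ f z (e3 j 1) - Complex.I * fderiv ℝ f z (e3 j Complex.I)) / 2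

/-- Wirtinger derivative ∂/∂z̄_j on ℂ³. -/
def wd3bar (j : Fin 3) (f : ℂ × ℂ × ℂ → ℂ) (z : ℂ × ℂ × ℂ) : ℂ :=
  (fderiv ℝ f z (e3 j 1) + Complex.I * fderiv ℝ f z (e3 j Complex.I)) / 2

/-- The Euclidean ball of radius `s` centered at `0` in ℂ × ℝ. -/
def ballCR (s : ℝ) : Set (ℂ × ℝ) := {p | ‖p.1‖ ^ 2 + p.2 ^ 2 < s ^ 2}

/-- The "box" U = {z : z₁ ∈ D, (z₂, Im z₃) ∈ B, |Re z₃| < t}. -/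
def Ubox (r s t : ℝ) : Set (ℂ × ℂ × ℂ) :=
  {z | z.1 ∈ Metric.ball (0 : ℂ) r ∧ (z.2.1, z.2.2.im) ∈ ballCR s ∧ |z.2.2.re| < t}

/-- The graph domain Ω = {z ∈ U : Re z₃ > φ(z₁, z₂, Im z₃)}. -/
def GraphDomain (r s t : ℝ) (φ : ℂ × ℂ × ℝ → ℝ) : Set (ℂ × ℂ × ℂ) :=
  {z ∈ Ubox r s t | φ (z.1, z.2.1, z.2.2.im) < z.2.2.re}

/-- The defining function ρ(z) = φ(z₁, z₂, Im z₃) − Re z₃ (ℂ-valued). -/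
def graphRho (φ : ℂ × ℂ × ℝ → ℝ) : ℂ × ℂ × ℂ → ℂ :=
  fun z => (φ (z.1, z.2.1, z.2.2.im) : ℂ) - (z.2.2.re : ℂ)

/-- Pseudoconvexity of the graph domain at its graph boundary. -/
def PseudoconvexGraph (r s t : ℝ) (φ : ℂ × ℂ × ℝ → ℝ) : Prop :=
  ∀ z : ℂ × ℂ × ℂ, z.1 ∈ Metric.ball (0 : ℂ) r → (z.2.1, z.2.2.im) ∈ ballCR s →
    |z.2.2.re| < t → z.2.2.re = φ (z.1, z.2.1, z.2.2.im) →
    ∀ u : Fin 3 → ℂ,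
      (∑ j, wd3 j (graphRho φ) z * u j) = 0 →
      0 ≤ (∑ j, ∑ k, wd3 j (wd3bar k (graphRho φ)) z * u j * (starRingEnd ℂ) (u k)).re

/-- Biholomorphism of `V` onto `U`. -/
def Biholo (V U : Set (ℂ × ℂ × ℂ)) (Φ : ℂ × ℂ × ℂ → ℂ × ℂ × ℂ) : Prop :=
  DifferentiableOn ℂ Φ V ∧ Set.BijOn Φ V U ∧
    ∃ Ψ : ℂ × ℂ × ℂ → ℂ × ℂ × ℂ, DifferentiableOn ℂ Ψ U ∧
      (∀ z ∈ V, Ψ (Φ z) = z) ∧ (∀ w ∈ U, Φ (Ψ w) = w)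

lemma contDiff_fderiv_apply {g : ℂ → ℂ} (hg : ContDiff ℝ (⊤ : ℕ∞) g) (a : ℂ) :
    ContDiff ℝ (⊤ : ℕ∞) (fun z => fderiv ℝ g z a) := by
  have h1 : ContDiff ℝ (⊤ : ℕ∞) (fderiv ℝ g) := hg.fderiv_right (by exact_mod_cast le_top)
  exact (ContinuousLinearMap.apply ℝ ℂ a).contDiff.comp h1

lemma w1_contDiff {g : ℂ → ℂ} (hg : ContDiff ℝ (⊤ : ℕ∞) g) : ContDiff ℝ (⊤ : ℕ∞) (w1 g) := by
  unfold w1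
  exact ((contDiff_fderiv_apply hg 1).sub (contDiff_const.mul (contDiff_fderiv_apply hg I))).div_const 2

lemma w1bar_contDiff {g : ℂ → ℂ} (hg : ContDiff ℝ (⊤ : ℕ∞) g) : ContDiff ℝ (⊤ : ℕ∞) (w1bar g) := by
  unfold w1bar
  exact ((contDiff_fderiv_apply hg 1).add (contDiff_const.mul (contDiff_fderiv_apply hg I))).div_const 2

lemma w1_w1bar_comm {g : ℂ → ℂ} (hg : ContDiff ℝ (⊤ : ℕ∞) g) (z : ℂ) :
    w1 (w1bar g) z = w1bar (w1 g) z := by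
  have hdg : Differentiable ℝ (fderiv ℝ g) := by
    have h1 : ContDiff ℝ (⊤ : ℕ∞) (fderiv ℝ g) := hg.fderiv_right (by exact_mod_cast le_top)
    exact h1.differentiable (by simp)
  have hAv : ∀ v : ℂ, Differentiable ℝ (fun y => fderiv ℝ g y v) := fun v =>
    (contDiff_fderiv_apply hg v).differentiable (by simp)
  have key : ∀ a v : ℂ, fderiv ℝ (fun y => fderiv ℝ g y v) z a = fderiv ℝ (fderiv ℝ g) z a v := by
    intro a v
    rw [fderiv_clm_apply (hdg z) (differentiableAt_const v)]
    simp
  have symm : fderiv ℝ (fderiv ℝ g) z 1 I = fderiv ℝ (fderiv ℝ g) z I 1 :=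
    second_derivative_symmetric (fun y => (hg.differentiable (by simp) y).hasFDerivAt)
      (hdg z).hasFDerivAt 1 I
  have e : ∀ (c d : ℂ) (a : ℂ),
      fderiv ℝ (fun y => c * fderiv ℝ g y 1 + d * fderiv ℝ g y I) z a
        = c * fderiv ℝ (fderiv ℝ g) z a 1 + d * fderiv ℝ (fderiv ℝ g) z a I := by
    intro c d a
    rw [fderiv_fun_add ((hAv 1).differentiableAt.const_mul c) ((hAv I).differentiableAt.const_mul d),
      fderiv_const_mul (hAv 1).differentiableAt c, fderiv_const_mul (hAv I).differentiableAt d]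
    simp [key a 1, key a I]
  have hbar : w1bar g = fun y => (2⁻¹ : ℂ) * fderiv ℝ g y 1 + (I / 2) * fderiv ℝ g y I := by
    funext y; unfold w1bar; ring
  have hw : w1 g = fun y => (2⁻¹ : ℂ) * fderiv ℝ g y 1 + (-I / 2) * fderiv ℝ g y I := by
    funext y; unfold w1; ring
  rw [hbar, hw]
  unfold w1 w1bar
  rw [e, e, e, e]
  rw [symm]
  ring

section aux2

lemma w1_iter_contDiff {g : ℂ → ℂ} (hg : ContDiff ℝ (⊤ : ℕ∞) g) (j : ℕ) :
    ContDiff ℝ (⊤ : ℕ∞) (w1^[j] g) := by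
  induction j generalizing g with
  | zero => exact hg
  | succ j IH => rw [Function.iterate_succ_apply]; exact IH (w1_contDiff hg)

lemma w1bar_iter_contDiff {g : ℂ → ℂ} (hg : ContDiff ℝ (⊤ : ℕ∞) g) (k : ℕ) :
    ContDiff ℝ (⊤ : ℕ∞) (w1bar^[k] g) := by
  induction k generalizing g with
  | zero => exact hg
  | succ k IH => rw [Function.iterate_succ_apply]; exact IH (w1bar_contDiff hg)

lemma w1bar_w1_iterate {g : ℂ → ℂ} (hg : ContDiff ℝ (⊤ : ℕ∞) g) (j : ℕ) :
    w1bar (w1^[j] g) = w1^[j] (w1bar g) := by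
  induction j generalizing g with
  | zero => rfl
  | succ j IH =>
    rw [Function.iterate_succ_apply, Function.iterate_succ_apply, IH (w1_contDiff hg)]
    have : w1bar (w1 g) = w1 (w1bar g) := funext fun z => (w1_w1bar_comm hg z).symm
    rw [this]

def Dword : List ℂ → (ℂ → ℂ) → ℂ → ℂ
  | [], g => g
  | a :: L, g => Dword L (fun x => fderiv ℝ g x a)

lemma Dword_contDiff : ∀ (L : List ℂ) {g : ℂ → ℂ}, ContDiff ℝ (⊤ : ℕ∞) g →
    ContDiff ℝ (⊤ : ℕ∞) (Dword L g)
  | [], _, hg => hg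
  | a :: L, _, hg => Dword_contDiff L (contDiff_fderiv_apply hg a)

lemma Dword_append : ∀ (L₁ L₂ : List ℂ) (g : ℂ → ℂ),
    Dword (L₁ ++ L₂) g = Dword L₂ (Dword L₁ g)
  | [], L₂, g => rfl
  | a :: L₁, L₂, g => by
    show Dword (L₁ ++ L₂) _ = _
    rw [Dword_append L₁ L₂]
    rfl

lemma Dword_add : ∀ (L : List ℂ) {g h : ℂ → ℂ}, ContDiff ℝ (⊤ : ℕ∞) g → ContDiff ℝ (⊤ : ℕ∞) h →
    Dword L (fun x => g x + h x) = fun x => Dword L g x + Dword L h x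
  | [], g, h, hg, hh => rfl
  | a :: L, g, h, hg, hh => by
    show Dword L _ = _
    have e : (fun x => fderiv ℝ (fun x => g x + h x) x a)
        = fun x => fderiv ℝ g x a + fderiv ℝ h x a := by
      funext x
      rw [fderiv_fun_add (hg.differentiable (by simp) x)
        (hh.differentiable (by simp) x)]
      rfl
    rw [e, Dword_add L (contDiff_fderiv_apply hg a) (contDiff_fderiv_apply hh a)]
    rfl

lemma Dword_const_mul : ∀ (L : List ℂ) {g : ℂ → ℂ} (c : ℂ), ContDiff ℝ (⊤ : ℕ∞) g →
    Dword L (fun x => c * g x) = fun x => c * Dword L g x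
  | [], g, c, hg => rfl
  | a :: L, g, c, hg => by
    show Dword L _ = _
    have e : (fun x => fderiv ℝ (fun x => c * g x) x a) = fun x => c * fderiv ℝ g x a := by
      funext x
      rw [fderiv_const_mul (hg.differentiable (by simp) x) c]
      simp
    rw [e, Dword_const_mul L c (contDiff_fderiv_apply hg a)]
    rfl

lemma wirt_combo (P Q a : ℂ) :
    a.re • (P + Q) + a.im • (Complex.I * (P - Q)) = a * P + (starRingEnd ℂ) a * Q := by
  have h1 : a = (a.re : ℂ) + (a.im : ℂ) * Complex.I := (Complex.re_add_im a).symm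
  have h2 : (starRingEnd ℂ) a = (a.re : ℂ) - (a.im : ℂ) * Complex.I := by
    apply Complex.ext <;> simp
  rw [Complex.real_smul, Complex.real_smul, h2]
  linear_combination P * Complex.re_add_im a

lemma key_vanish {F : ℂ → ℂ} (hF : ContDiff ℝ (⊤ : ℕ∞) F) {τ : ℕ}
    (hv : ∀ j k, j + k < τ → (w1^[j] (w1bar^[k] F)) 0 = 0) :
    ∀ (L : List ℂ) (j k : ℕ), j + k + L.length < τ → Dword L (w1^[j] (w1bar^[k] F)) 0 = 0 := by
  intro L
  induction L with
  | nil => intro j k h; exact hv j k (by simpa using h)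
  | cons a L IH =>
    intro j k h
    have hWs : ∀ j k : ℕ, ContDiff ℝ (⊤ : ℕ∞) (w1^[j] (w1bar^[k] F)) := fun j k =>
      w1_iter_contDiff (w1bar_iter_contDiff hF k) j
    have hfd : (fun x => fderiv ℝ (w1^[j] (w1bar^[k] F)) x a)
        = fun x => a * (w1^[j+1] (w1bar^[k] F)) x
            + (starRingEnd ℂ) a * (w1^[j] (w1bar^[k+1] F)) x := by
      funext x
      set W := w1^[j] (w1bar^[k] F) with hWdef
      have hWd : DifferentiableAt ℝ W x :=
        ((hWs j k).differentiable (by simp) x)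
      have h1 : fderiv ℝ W x 1 = w1 W x + w1bar W x := by
        unfold w1 w1bar; ring
      have hI : fderiv ℝ W x I = I * (w1 W x - w1bar W x) := by
        unfold w1 w1bar
        linear_combination (fderiv ℝ W x I) * Complex.I_sq
      have ha : a = a.re • (1 : ℂ) + a.im • I := by
        simp [Complex.real_smul, Complex.re_add_im]
      have hmap : fderiv ℝ W x a = a.re • fderiv ℝ W x 1 + a.im • fderiv ℝ W x I := by
        conv_lhs => rw [ha]
        rw [(fderiv ℝ W x).map_add, (fderiv ℝ W x).map_smul, (fderiv ℝ W x).map_smul]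
      have hw1W : w1 W x = (w1^[j+1] (w1bar^[k] F)) x := by
        rw [Function.iterate_succ_apply']
      have hw1barW : w1bar W x = (w1^[j] (w1bar^[k+1] F)) x := by
        have := w1bar_w1_iterate (w1bar_iter_contDiff hF k) j
        rw [hWdef, this, Function.iterate_succ_apply']
      rw [hmap, h1, hI, wirt_combo, hw1W, hw1barW]
    show Dword L _ 0 = 0
    rw [hfd, Dword_add L ((contDiff_const (c := a)).mul (hWs (j+1) k))
        ((contDiff_const (c := (starRingEnd ℂ) a)).mul (hWs j (k+1))),
      Dword_const_mul L a (hWs (j+1) k), Dword_const_mul L ((starRingEnd ℂ) a) (hWs j (k+1))]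
    have h1 := IH (j+1) k (by simp at h ⊢; omega)
    have h2 := IH j (k+1) (by simp at h ⊢; omega)
    simp only [Function.iterate_succ_apply] at h1 h2 ⊢
    rw [h1, h2]
    ring

end aux2
section slice

lemma slice_Dz2bar (g : ℂ × ℂ × ℝ → ℂ) (z₁ : ℂ) (y : ℝ) :
    ∀ k, (fun w => (Dz2bar^[k] g) (z₁, w, y)) = w1bar^[k] (fun w => g (z₁, w, y))
  | 0 => rfl
  | k + 1 => by
    rw [Function.iterate_succ_apply, slice_Dz2bar (Dz2bar g) z₁ y k,
      Function.iterate_succ_apply]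
    rfl

lemma slice_Dz2 (g : ℂ × ℂ × ℝ → ℂ) (z₁ : ℂ) (y : ℝ) :
    ∀ j, (fun w => (Dz2^[j] g) (z₁, w, y)) = w1^[j] (fun w => g (z₁, w, y))
  | 0 => rfl
  | j + 1 => by
    rw [Function.iterate_succ_apply, slice_Dz2 (Dz2 g) z₁ y j, Function.iterate_succ_apply]
    rfl

lemma mixedD_eq (φ : ℂ × ℂ × ℝ → ℝ) (j k : ℕ) (z₁ : ℂ) :
    mixedD φ j k z₁ = (w1^[j] (w1bar^[k] (fun w => ((φ (z₁, w, 0) : ℝ) : ℂ)))) 0 := by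
  unfold mixedD
  have h1 : (Dz2^[j] (Dz2bar^[k] fun p => ((φ p : ℝ) : ℂ))) (z₁, 0, 0)
      = (fun w => (Dz2^[j] (Dz2bar^[k] fun p => ((φ p : ℝ) : ℂ))) (z₁, w, 0)) 0 := rfl
  rw [h1, slice_Dz2 _ z₁ 0 j, slice_Dz2bar _ z₁ 0 k]

end slice

section eqon

lemma eqon_w1 {V : Set ℂ} (hV : IsOpen V) {g h : ℂ → ℂ} (he : Set.EqOn g h V) :
    Set.EqOn (w1 g) (w1 h) V := by
  intro z hz
  have hfe : fderiv ℝ g z = fderiv ℝ h z :=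
    Filter.EventuallyEq.fderiv_eq (he.eventuallyEq_of_mem (hV.mem_nhds hz))
  unfold w1
  rw [hfe]

lemma eqon_w1bar {V : Set ℂ} (hV : IsOpen V) {g h : ℂ → ℂ} (he : Set.EqOn g h V) :
    Set.EqOn (w1bar g) (w1bar h) V := by
  intro z hz
  have hfe : fderiv ℝ g z = fderiv ℝ h z :=
    Filter.EventuallyEq.fderiv_eq (he.eventuallyEq_of_mem (hV.mem_nhds hz))
  unfold w1bar
  rw [hfe]

lemma eqon_w1_iter {V : Set ℂ} (hV : IsOpen V) {g h : ℂ → ℂ} (he : Set.EqOn g h V) (j : ℕ) :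
    Set.EqOn (w1^[j] g) (w1^[j] h) V := by
  induction j generalizing g h with
  | zero => exact he
  | succ j IH =>
    rw [Function.iterate_succ_apply, Function.iterate_succ_apply]
    exact IH (eqon_w1 hV he)

lemma eqon_w1bar_iter {V : Set ℂ} (hV : IsOpen V) {g h : ℂ → ℂ} (he : Set.EqOn g h V) (k : ℕ) :
    Set.EqOn (w1bar^[k] g) (w1bar^[k] h) V := by
  induction k generalizing g h with
  | zero => exact he
  | succ k IH =>
    rw [Function.iterate_succ_apply, Function.iterate_succ_apply]
    exact IH (eqon_w1bar hV he)

end eqon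
section taylorinfra

abbrev EE := ℂ × ℂ × ℝ

lemma dir_deriv {G : EE → ℂ} (hG : ContDiff ℝ (⊤ : ℕ∞) G) (p₀ u : EE) :
    ∀ (n : ℕ) (t : ℝ), iteratedDeriv n (fun t : ℝ => G (p₀ + t • u)) t
      = iteratedFDeriv ℝ n G (p₀ + t • u) (fun _ => u) := by
  intro n
  induction n with
  | zero => intro t; simp [iteratedDeriv_zero]
  | succ n IH =>
    intro t
    rw [iteratedDeriv_succ]
    have hrw : iteratedDeriv n (fun t : ℝ => G (p₀ + t • u))
        = fun t : ℝ => iteratedFDeriv ℝ n G (p₀ + t • u) (fun _ => u) := funext IH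
    rw [hrw]
    have hdiff : Differentiable ℝ (iteratedFDeriv ℝ n G) := by
      apply hG.differentiable_iteratedFDeriv
      exact_mod_cast WithTop.coe_lt_top _
    have h1 : HasFDerivAt (fun y : EE => iteratedFDeriv ℝ n G y (fun _ => u))
        ((ContinuousMultilinearMap.apply ℝ (fun _ : Fin n => EE) ℂ (fun _ => u)).comp
          (fderiv ℝ (iteratedFDeriv ℝ n G) (p₀ + t • u))) (p₀ + t • u) :=
      (ContinuousMultilinearMap.apply ℝ (fun _ : Fin n => EE) ℂ
        (fun _ => u)).hasFDerivAt.comp _ (hdiff _).hasFDerivAt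
    have h2 : HasDerivAt (fun t : ℝ => p₀ + t • u) u t := by
      simpa using ((hasDerivAt_id t).smul_const u).const_add p₀
    have h3 := h1.comp_hasDerivAt t h2
    simp only [Function.comp_def] at h3
    rw [h3.deriv]
    have hcons : (fun _ : Fin (n + 1) => u) = Fin.cons u (fun _ : Fin n => u) := by
      funext i
      refine Fin.cases ?_ (fun i => ?_) i <;> simp
    rw [hcons, iteratedFDeriv_succ_apply_left]
    simp [Fin.tail]

lemma iter_slice {f : ℂ → ℂ} (hf : ContDiff ℝ (⊤ : ℕ∞) f) (z₂ : ℂ) :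
    ∀ (n : ℕ) (t : ℝ), iteratedDeriv n (fun t : ℝ => f (t • z₂)) t
      = Dword (List.replicate n z₂) f (t • z₂) := by
  intro n
  induction n with
  | zero => intro t; simp [iteratedDeriv_zero, Dword]
  | succ n IH =>
    intro t
    rw [iteratedDeriv_succ]
    have hrw : iteratedDeriv n (fun t : ℝ => f (t • z₂))
        = fun t : ℝ => Dword (List.replicate n z₂) f (t • z₂) := funext IH
    rw [hrw]
    have hG : ContDiff ℝ (⊤ : ℕ∞) (Dword (List.replicate n z₂) f) := Dword_contDiff _ hf
    have h2 : HasDerivAt (fun t : ℝ => t • z₂) z₂ t := by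
      simpa using (hasDerivAt_id t).smul_const z₂
    have h3 := ((hG.differentiable (by simp)
      (t • z₂)).hasFDerivAt).comp_hasDerivAt t h2
    simp only [Function.comp_def] at h3
    rw [h3.deriv]
    rw [List.replicate_succ', Dword_append]
    rfl

lemma iteratedDerivWithin_eq_top {f : ℝ → ℂ} (hf : ContDiff ℝ (⊤ : ℕ∞) f) {s : Set ℝ}
    (hs : UniqueDiffOn ℝ s) {x : ℝ} (hx : x ∈ s) (n : ℕ) :
    iteratedDerivWithin n f s x = iteratedDeriv n f x := by
  rw [iteratedDerivWithin_eq_iteratedFDerivWithin, iteratedDeriv_eq_iteratedFDeriv]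
  congr 1
  have h : HasFTaylorSeriesUpTo (⊤ : ℕ∞) f (ftaylorSeries ℝ f) :=
    contDiff_iff_ftaylorSeries.mp hf
  have h1 : HasFTaylorSeriesUpToOn (⊤ : ℕ∞) f (ftaylorSeries ℝ f) s :=
    (hasFTaylorSeriesUpToOn_univ_iff.mpr h).mono (Set.subset_univ s)
  have h2 := h1.eq_iteratedFDerivWithin_of_uniqueDiffOn (m := n) (by exact_mod_cast le_top) hs hx
  rw [← h2]
  rw [h.eq_iteratedFDeriv (m := n) (by exact_mod_cast le_top)]

end taylorinfra

set_option maxHeartbeats 2000000 in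
/-- anisotropic Taylor estimate φ(z₁,z₂,y) ≤ C|z₂|^τ + C|y|,
uniform in z₁ on a smaller disc. -/
theorem statement_16 (r s : ℝ) (hr : 0 < r) (hs : 0 < s) (τ : ℕ) (hτ : 1 ≤ τ)
    (φ : ℂ × ℂ × ℝ → ℝ)
    (hφsm : ContDiffOn ℝ (⊤ : ℕ∞) φ (Metric.ball (0 : ℂ) r ×ˢ ballCR s))
    (hderIm : ∀ z₁ ∈ Metric.ball (0 : ℂ) r, Dy (fun p => (φ p : ℂ)) (z₁, 0, 0) = 0)
    (hvan : ∀ z₁ ∈ Metric.ball (0 : ℂ) r, ∀ j k : ℕ, j + k < τ → mixedD φ j k z₁ = 0) :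
    ∃ r' : ℝ, 0 < r' ∧ r' ≤ r ∧ ∃ ε > 0, ∃ C > 0,
      (∀ z₂ : ℂ, ∀ y : ℝ, ‖z₂‖ ^ 2 + y ^ 2 < ε ^ 2 → (z₂, y) ∈ ballCR s) ∧
      ∀ z₁ ∈ Metric.ball (0 : ℂ) r', ∀ z₂ : ℂ, ∀ y : ℝ, ‖z₂‖ ^ 2 + y ^ 2 < ε ^ 2 →
        φ (z₁, z₂, y) ≤ C * ‖z₂‖ ^ τ + C * |y| := by
  classical
  set ρo : ℝ := min r s / 2 with hρo
  have hρopos : 0 < ρo := by have := lt_min hr hs; positivity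
  set ρi : ℝ := ρo / 2 with hρi
  have hρipos : 0 < ρi := by positivity
  -- the bump function
  set χ : ContDiffBump (0 : EE) :=
    ⟨ρi, ρo, hρipos, by rw [hρi]; linarith⟩ with hχ
  set Φ : EE → ℝ := fun p => χ p * φ p with hΦdef
  set U : Set EE := Metric.ball (0 : ℂ) r ×ˢ ballCR s with hU
  have hUopen : IsOpen U := by
    apply IsOpen.prod Metric.isOpen_ball
    have : ballCR s = {p : ℂ × ℝ | ‖p.1‖ ^ 2 + p.2 ^ 2 < s ^ 2} := rfl
    rw [this]
    exact isOpen_lt (by fun_prop) continuous_const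
  have hmemcb : ∀ (a b : ℂ) (c : ℝ) (ρ : ℝ), ‖a‖ ≤ ρ → ‖b‖ ≤ ρ → |c| ≤ ρ →
      ((a, b, c) : EE) ∈ Metric.closedBall (0 : EE) ρ := by
    intro a b c ρ h1 h2 h3
    rw [mem_closedBall_zero_iff]
    rw [Prod.norm_def, Prod.norm_def]
    simp only [max_le_iff]
    exact ⟨h1, h2, by simpa using h3⟩
  have hsub : Metric.closedBall (0 : EE) ρo ⊆ U := by
    intro p hp
    rw [mem_closedBall_zero_iff] at hp
    rw [Prod.norm_def, Prod.norm_def, max_le_iff, max_le_iff] at hp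
    constructor
    · rw [mem_ball_zero_iff]
      calc ‖p.1‖ ≤ ρo := hp.1
        _ < r := by rw [hρo]; have := min_le_left r s; linarith
    · show ‖p.2.1‖ ^ 2 + p.2.2 ^ 2 < s ^ 2
      have h1 : ‖p.2.1‖ ≤ ρo := hp.2.1
      have h2 : |p.2.2| ≤ ρo := by simpa using hp.2.2
      have h3 : ρo ≤ s / 2 := by rw [hρo]; have := min_le_right r s; linarith
      nlinarith [norm_nonneg p.2.1, abs_nonneg p.2.2, _root_.sq_abs p.2.2]
  have hΦ : ContDiff ℝ (⊤ : ℕ∞) Φ := by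
    rw [contDiff_iff_contDiffAt]
    intro p
    by_cases hp : p ∈ U
    · exact χ.contDiffAt.mul (hφsm.contDiffAt (hUopen.mem_nhds hp))
    · have hpnot : p ∉ tsupport (χ : EE → ℝ) := by
        rw [χ.tsupport_eq]
        intro hmem
        exact hp (hsub hmem)
      have hev : Φ =ᶠ[𝓝 p] (fun _ => (0 : ℝ)) := by
        filter_upwards [(isClosed_tsupport (χ : EE → ℝ)).isOpen_compl.mem_nhds hpnot] with q hq
        have : χ q = 0 := image_eq_zero_of_notMem_tsupport hq
        simp [hΦdef, this]
      exact (contDiffAt_const (c := (0:ℝ))).congr_of_eventuallyEq hev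
  have hΦeq : ∀ p ∈ Metric.closedBall (0 : EE) ρi, Φ p = φ p := by
    intro p hp
    have : χ p = 1 := χ.one_of_mem_closedBall hp
    simp [hΦdef, this]
  set Φc : EE → ℂ := fun p => ((Φ p : ℝ) : ℂ) with hΦc
  have hΦcsm : ContDiff ℝ (⊤ : ℕ∞) Φc := Complex.ofRealCLM.contDiff.comp hΦ
  -- bounds on the compact set
  obtain ⟨M₁, hM₁⟩ := (isCompact_closedBall (0 : EE) ρi).exists_bound_of_continuousOn
    ((hΦ.continuous_fderiv (by simp)).continuousOn)
  obtain ⟨M₂, hM₂⟩ := (isCompact_closedBall (0 : EE) ρi).exists_bound_of_continuousOn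
    ((hΦcsm.continuous_iteratedFDeriv (m := τ) (by exact_mod_cast le_top)).continuousOn)
  set M₁' : ℝ := max M₁ 0 with hM₁'
  set M₂' : ℝ := max M₂ 0 with hM₂'
  set C : ℝ := max M₁' M₂' + 1 with hC
  have hCpos : 0 < C := by
    have h0 : (0:ℝ) ≤ M₁' := le_max_right M₁ 0
    have : (0:ℝ) ≤ max M₁' M₂' := le_trans h0 (le_max_left M₁' M₂')
    linarith
  set ε : ℝ := ρi / 2 with hε
  have hεpos : 0 < ε := by positivity
  have hεs : ε ≤ s := by
    rw [hε, hρi, hρo]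
    have := min_le_right r s
    linarith
  refine ⟨ρi / 2, by positivity, ?_, ε, hεpos, C, hCpos, ?_, ?_⟩
  · rw [hρi, hρo]
    have := min_le_left r s
    linarith
  · intro z₂ y hlt
    show ‖z₂‖ ^ 2 + y ^ 2 < s ^ 2
    have : ε ^ 2 ≤ s ^ 2 := by nlinarith
    linarith
  · intro z₁ hz₁ z₂ y hlt
    rw [mem_ball_zero_iff] at hz₁
    have hz₂ : ‖z₂‖ < ε := by
      have h1 : ‖z₂‖ ^ 2 < ε ^ 2 := by nlinarith [sq_nonneg y]
      nlinarith [norm_nonneg z₂]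
    have hy : |y| < ε := by
      have h1 : |y| ^ 2 < ε ^ 2 := by rw [_root_.sq_abs]; nlinarith [sq_nonneg ‖z₂‖]
      nlinarith [abs_nonneg y]
    have hz₁ρ : ‖z₁‖ ≤ ρi := by rw [hε] at *; linarith
    have hz₂ρ : ‖z₂‖ ≤ ρi := by rw [hε] at hz₂; linarith
    have hyρ : |y| ≤ ρi := by rw [hε] at hy; linarith
    -- Step 1 : the y-direction estimate via MVT
    have hstep1 : |φ (z₁, z₂, y) - φ (z₁, z₂, 0)| ≤ M₁' * |y| := by
      have hmvt := Convex.norm_image_sub_le_of_norm_hasFDerivWithin_le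
        (f := Φ) (f' := fun p => fderiv ℝ Φ p) (s := Metric.closedBall (0 : EE) ρi)
        (C := M₁')
        (fun p _ => ((hΦ.differentiable (by simp)) p).hasFDerivAt.hasFDerivWithinAt)
        (fun p hp => le_trans (hM₁ p hp) (le_max_left M₁ 0))
        (convex_closedBall _ _)
        (hmemcb z₁ z₂ 0 ρi hz₁ρ hz₂ρ (by simpa using hρipos.le))
        (hmemcb z₁ z₂ y ρi hz₁ρ hz₂ρ hyρ)
      have hnorm : ‖((z₁, z₂, y) : EE) - ((z₁, z₂, 0) : EE)‖ = |y| := by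
        have : ((z₁, z₂, y) : EE) - ((z₁, z₂, 0) : EE) = ((0 : ℂ), (0 : ℂ), y) := by
          simp [Prod.ext_iff]
        rw [this, Prod.norm_def, Prod.norm_def]
        simp [abs_nonneg]
      rw [hnorm, hΦeq _ (hmemcb z₁ z₂ y ρi hz₁ρ hz₂ρ hyρ),
        hΦeq _ (hmemcb z₁ z₂ 0 ρi hz₁ρ hz₂ρ (by simpa using hρipos.le))] at hmvt
      simpa [Real.norm_eq_abs] using hmvt
    -- Step 2 : Taylor estimate in z₂
    set f : ℂ → ℂ := fun w => Φc (z₁, w, 0) with hfdef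
    have hfsm : ContDiff ℝ (⊤ : ℕ∞) f :=
      hΦcsm.comp (contDiff_const.prodMk (contDiff_id.prodMk contDiff_const))
    have heqon : Set.EqOn f (fun w => ((φ (z₁, w, 0) : ℝ) : ℂ)) (Metric.ball (0 : ℂ) ρi) := by
      intro w hw
      rw [mem_ball_zero_iff] at hw
      show ((Φ (z₁, w, 0) : ℝ) : ℂ) = ((φ (z₁, w, 0) : ℝ) : ℂ)
      rw [hΦeq _ (hmemcb z₁ w 0 ρi hz₁ρ hw.le (by simpa using hρipos.le))]
    have hz₁r : z₁ ∈ Metric.ball (0 : ℂ) r := by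
      rw [mem_ball_zero_iff]
      have : ρi < r := by
        rw [hρi, hρo]; have := min_le_left r s; linarith
      linarith
    have hWvan : ∀ j k, j + k < τ → (w1^[j] (w1bar^[k] f)) 0 = 0 := by
      intro j k hjk
      have h0mem : (0 : ℂ) ∈ Metric.ball (0 : ℂ) ρi := mem_ball_self hρipos
      have := eqon_w1_iter Metric.isOpen_ball
        (eqon_w1bar_iter Metric.isOpen_ball heqon k) j h0mem
      rw [this, ← mixedD_eq]
      exact hvan z₁ hz₁r j k hjk
    set u : EE := ((0 : ℂ), z₂, (0 : ℝ)) with hu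
    set p₀ : EE := (z₁, (0 : ℂ), (0 : ℝ)) with hp₀
    have hBt : ∀ t : ℝ, p₀ + t • u = ((z₁, t • z₂, 0) : EE) := by
      intro t
      rw [hu, hp₀, Prod.smul_mk, Prod.smul_mk, Prod.mk_add_mk, Prod.mk_add_mk]
      simp
    set h : ℝ → ℂ := fun t => f (t • z₂) with hhdef
    have hhsm : ContDiff ℝ (⊤ : ℕ∞) h := hfsm.comp (contDiff_id.smul contDiff_const)
    have hhdir : h = fun t : ℝ => Φc (p₀ + t • u) := by
      funext t
      rw [hBt t]
    have hvanh : ∀ m, m < τ → iteratedDeriv m h 0 = 0 := by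
      intro m hm
      rw [hhdef, iter_slice hfsm z₂ m 0, zero_smul]
      exact key_vanish hfsm hWvan (List.replicate m z₂) 0 0 (by simpa using hm)
    set n : ℕ := τ - 1 with hn
    have hn1 : n + 1 = τ := by omega
    have hIcc : UniqueDiffOn ℝ (Set.Icc (0:ℝ) 1) := uniqueDiffOn_Icc zero_lt_one
    have hCbound : ∀ x ∈ Set.Icc (0:ℝ) 1,
        ‖iteratedDerivWithin (n + 1) h (Set.Icc 0 1) x‖ ≤ M₂' * ‖z₂‖ ^ τ := by
      intro x hx
      rw [iteratedDerivWithin_eq_top hhsm hIcc hx (n + 1), hn1, hhdir,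
        dir_deriv hΦcsm p₀ u τ x]
      have hmem : p₀ + x • u ∈ Metric.closedBall (0 : EE) ρi := by
        rw [hBt x]
        refine hmemcb z₁ (x • z₂) 0 ρi hz₁ρ ?_ (by simpa using hρipos.le)
        rw [norm_smul]
        calc ‖x‖ * ‖z₂‖ ≤ 1 * ‖z₂‖ := by
              apply mul_le_mul_of_nonneg_right _ (norm_nonneg z₂)
              rw [Real.norm_eq_abs, abs_le]
              exact ⟨by linarith [hx.1], hx.2⟩
          _ = ‖z₂‖ := one_mul _
          _ ≤ ρi := hz₂ρ
      calc ‖iteratedFDeriv ℝ τ Φc (p₀ + x • u) fun _ => u‖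
          ≤ ‖iteratedFDeriv ℝ τ Φc (p₀ + x • u)‖ * ∏ _i : Fin τ, ‖u‖ :=
            ContinuousMultilinearMap.le_opNorm _ _
        _ ≤ M₂' * ‖z₂‖ ^ τ := by
            have h1 : ‖u‖ = ‖z₂‖ := by
              rw [hu, Prod.norm_def, Prod.norm_def]
              simp [norm_nonneg]
            have h2 : ∏ _i : Fin τ, ‖u‖ = ‖z₂‖ ^ τ := by
              rw [h1]; simp
            rw [h2]
            apply mul_le_mul_of_nonneg_right _ (by positivity)
            exact le_trans (hM₂ _ hmem) (le_max_left M₂ 0)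
    have hcont : ContDiffOn ℝ (n + 1 : ℕ) h (Set.Icc (0:ℝ) 1) :=
      (hhsm.of_le (by exact_mod_cast le_top)).contDiffOn
    have htay := taylor_mean_remainder_bound (f := h) (a := 0) (b := 1) (n := n)
      zero_le_one hcont (Set.right_mem_Icc.mpr zero_le_one) hCbound
    have hpoly : taylorWithinEval h n (Set.Icc (0:ℝ) 1) 0 1 = 0 := by
      rw [taylor_within_apply]
      apply Finset.sum_eq_zero
      intro m hm
      rw [Finset.mem_range] at hm
      rw [iteratedDerivWithin_eq_top hhsm hIcc (Set.left_mem_Icc.mpr zero_le_one) m,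
        hvanh m (by omega)]
      simp
    rw [hpoly, sub_zero] at htay
    have hfact : (1:ℝ) ≤ (Nat.factorial n : ℝ) := by
      exact_mod_cast Nat.one_le_iff_ne_zero.mpr (Nat.factorial_ne_zero n)
    have hstep2 : φ (z₁, z₂, 0) ≤ M₂' * ‖z₂‖ ^ τ := by
      have hval : h 1 = ((φ (z₁, z₂, 0) : ℝ) : ℂ) := by
        rw [hhdef]
        show ((Φ ((z₁, (1:ℝ) • z₂, 0) : EE) : ℝ) : ℂ) = _
        rw [one_smul, hΦeq _ (hmemcb z₁ z₂ 0 ρi hz₁ρ hz₂ρ (by simpa using hρipos.le))]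
      rw [hval] at htay
      have hM₂nonneg : (0:ℝ) ≤ M₂' * ‖z₂‖ ^ τ := by
        apply mul_nonneg (le_max_right M₂ 0) (by positivity)
      have habs : ‖((φ (z₁, z₂, 0) : ℝ) : ℂ)‖ ≤ M₂' * ‖z₂‖ ^ τ := by
        refine le_trans htay ?_
        rw [sub_zero, one_pow, mul_one]
        rw [div_le_iff₀ (by linarith)]
        nlinarith
      rw [Complex.norm_real, Real.norm_eq_abs] at habs
      linarith [le_abs_self (φ (z₁, z₂, 0)), habs]
    -- combine
    have hM₁le : M₁' ≤ C := by rw [hC]; have := le_max_left M₁' M₂'; linarith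
    have hM₂le : M₂' ≤ C := by rw [hC]; have := le_max_right M₁' M₂'; linarith
    have h1 : φ (z₁, z₂, y) ≤ φ (z₁, z₂, 0) + M₁' * |y| := by
      have := abs_le.mp hstep1
      linarith [this.2]
    have hM₁'nonneg : (0:ℝ) ≤ M₁' := le_max_right M₁ 0
    calc φ (z₁, z₂, y) ≤ φ (z₁, z₂, 0) + M₁' * |y| := h1
      _ ≤ M₂' * ‖z₂‖ ^ τ + M₁' * |y| := by linarith
      _ ≤ C * ‖z₂‖ ^ τ + C * |y| := by
          have hp1 : (0:ℝ) ≤ ‖z₂‖ ^ τ := by positivity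
          have hp2 : (0:ℝ) ≤ |y| := abs_nonneg y
          nlinarith

end
end
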